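/- Let G be a partially ordered group with identity e and positive cone G⁺ = {x ∈ G : x > e}, and let 𝒥 be the set of all downward closed nonempty finite subsets of G⁺, with associated density σ_𝒥. For h ≥ 2, let A₁, …, A_h be subsets of G⁺ with σ_𝒥(A_i) = α_i for all i. Suppose that for every J ∈ 𝒥, every i ∈ {1, …, h}, and every x ∈ J \ A_i, the set A_i*(x) = {a ∈ A_i : a < x} is nonempty and finite. Then 1 − σ_𝒥(A₁⋯A_h) ≤ ∏_{i=1}^h (1 − α_i). -/

import Mathlib

/-- A subset `S` of the positive cone `G⁺ = {x : 1 < x}` is downward closed if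
`x ∈ S` implies `(e, x) ⊆ S`. -/
def DownwardClosed {G : Type*} [Group G] [PartialOrder G] (S : Set G) : Prop :=
  S ⊆ Set.Ioi 1 ∧ ∀ x ∈ S, Set.Ioo (1 : G) x ⊆ S

/-- The collection of all downward closed nonempty finite subsets of the
positive cone of `G`. -/
def goodJ (G : Type*) [Group G] [PartialOrder G] : Set (Set G) :=
  {J | J.Nonempty ∧ J.Finite ∧ DownwardClosed J}

/-- The density `σ_𝒥(A) = inf { |A ∩ J| / |J| : J ∈ 𝒥 }` determined by a
collection `𝒥` of subsets of `X`. -/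
noncomputable def densJ {X : Type*} (𝒥 : Set (Set X)) (A : Set X) : ℝ :=
  sInf ((fun J => ((A ∩ J).ncard : ℝ) / (J.ncard : ℝ)) '' 𝒥)

/-- The product `A₁ ⋯ A_h = {a₁ ⋯ a_h : aᵢ ∈ Aᵢ ∪ {e}}` of a family of
subsets of a (possibly noncommutative) group. -/
def prodFam {G : Type*} [Group G] {h : ℕ} (A : Fin h → Set G) : Set G :=
  {g | ∃ f : Fin h → G, (∀ i, f i ∈ A i ∪ {1}) ∧ (List.ofFn f).prod = g}

open Pointwise

section Helpers

variable {G : Type*}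

/-- Counting: a set covered by a finite union has small cardinality. -/
lemma aux_ncard_le_sum {T : Finset G} {U : G → Set G} {W : Set G}
    (hW : W ⊆ ⋃ a ∈ T, U a) (hU : ∀ a, (U a).Finite) :
    W.ncard ≤ ∑ a ∈ T, (U a).ncard := by
  classical
  have hWfin : W.Finite := by
    refine Set.Finite.subset ?_ hW
    exact Set.Finite.biUnion T.finite_toSet (fun a _ => hU a)
  have hsub : hWfin.toFinset ⊆ T.biUnion (fun a => (hU a).toFinset) := by
    intro x hx
    rw [Set.Finite.mem_toFinset] at hx
    obtain ⟨a, ha, hxa⟩ := Set.mem_iUnion₂.1 (hW hx)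
    exact Finset.mem_biUnion.2 ⟨a, ha, (hU a).mem_toFinset.2 hxa⟩
  calc W.ncard = hWfin.toFinset.card := Set.ncard_eq_toFinset_card _ hWfin
    _ ≤ (T.biUnion (fun a => (hU a).toFinset)).card := Finset.card_le_card hsub
    _ ≤ ∑ a ∈ T, ((hU a).toFinset).card := Finset.card_biUnion_le
    _ = ∑ a ∈ T, (U a).ncard := by
        refine Finset.sum_congr rfl fun a _ => ?_
        exact (Set.ncard_eq_toFinset_card _ (hU a)).symm

/-- Counting: a disjoint family of subsets of a finite set has small total size. -/
lemma aux_sum_le_ncard {T : Finset G} {V : G → Set G} {Z : Set G}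
    (hVZ : ∀ a ∈ T, V a ⊆ Z)
    (hdisj : ∀ a ∈ T, ∀ b ∈ T, a ≠ b → Disjoint (V a) (V b))
    (hZ : Z.Finite) (hV : ∀ a, (V a).Finite) :
    ∑ a ∈ T, (V a).ncard ≤ Z.ncard := by
  classical
  have h1 : ∑ a ∈ T, (V a).ncard = (T.biUnion (fun a => (hV a).toFinset)).card := by
    rw [Finset.card_biUnion]
    · refine Finset.sum_congr rfl fun a _ => ?_
      exact Set.ncard_eq_toFinset_card _ (hV a)
    · intro a ha b hb hab
      rw [Function.onFun, Finset.disjoint_left]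
      intro x hx1 hx2
      rw [Set.Finite.mem_toFinset] at hx1 hx2
      exact Set.disjoint_left.1 (hdisj a ha b hb hab) hx1 hx2
  rw [h1, Set.ncard_eq_toFinset_card _ hZ]
  apply Finset.card_le_card
  intro x hx
  obtain ⟨a, ha, hxa⟩ := Finset.mem_biUnion.1 hx
  rw [Set.Finite.mem_toFinset] at hxa ⊢
  exact hVZ a ha hxa

variable [Group G] [PartialOrder G]
  [CovariantClass G G (· * ·) (· ≤ ·)]
  [CovariantClass G G (Function.swap (· * ·)) (· ≤ ·)]

/-- The key one-step counting lemma (abstract Schnirelmann argument). -/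
lemma step_count (A B : Set G) (hA : A ⊆ Set.Ioi 1) (hB1 : (1 : G) ∈ B)
    (hAx : ∀ J ∈ goodJ G, ∀ x ∈ J \ A,
      (A ∩ Set.Iio x).Nonempty ∧ (A ∩ Set.Iio x).Finite)
    (γ : ℝ) (hγ : 0 ≤ γ)
    (hBd : ∀ J ∈ goodJ G, ((J \ B).ncard : ℝ) ≤ γ * J.ncard)
    (J : Set G) (hJ : J ∈ goodJ G) :
    ((J \ ((A ∪ {1}) * B)).ncard : ℝ) ≤ γ * ((J \ A).ncard : ℝ) := by
  classical
  obtain ⟨hJne, hJfin, hJsub, hJdc⟩ := hJ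
  have hJgood : J ∈ goodJ G := ⟨hJne, hJfin, hJsub, hJdc⟩
  set L : G →o LinearExtension G := toLinearExtension with hL
  have Linj : Function.Injective (L : G → LinearExtension G) := fun a b h => h
  have Lstrict : ∀ {a b : G}, a < b → L a < L b := by
    intro a b hab
    exact lt_of_le_of_ne (L.monotone hab.le) (fun h => absurd (Linj h) hab.ne)
  -- choice of a maximal (w.r.t. the linear extension) element of A below x
  have hsel : ∀ x, x ∈ J \ A → ∃ a : G,
      (a ∈ A ∧ a < x) ∧ ∀ b ∈ A ∩ Set.Iio x, L b ≤ L a := by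
    intro x hx
    obtain ⟨hne, hfin⟩ := hAx J hJgood x hx
    obtain ⟨m, hm, hmax⟩ := Finset.exists_max_image hfin.toFinset L
      (by rwa [← Set.Finite.toFinset_nonempty hfin] at hne)
    rw [Set.Finite.mem_toFinset] at hm
    refine ⟨m, ⟨hm.1, hm.2⟩, fun b hb => hmax b (hfin.mem_toFinset.2 hb)⟩
  choose! φ hφ using hsel
  -- coherence of the choice
  have hcoh : ∀ x, x ∈ J \ A → ∀ y, φ x < y → y < x → y ∈ J \ A ∧ φ y = φ x := by
    intro x hx y h1 h2
    have hxA := (hφ x hx).1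
    have h1G : (1 : G) < y := lt_trans (hA hxA.1) h1
    have hyJ : y ∈ J := hJdc x hx.1 ⟨h1G, h2⟩
    have hyA : y ∉ A := by
      intro hyA
      have hle := (hφ x hx).2 y ⟨hyA, h2⟩
      exact absurd hle (not_le_of_gt (Lstrict h1))
    refine ⟨⟨hyJ, hyA⟩, ?_⟩
    have hy := hφ y ⟨hyJ, hyA⟩
    have e1 : L (φ y) ≤ L (φ x) := (hφ x hx).2 (φ y) ⟨hy.1.1, lt_trans hy.1.2 h2⟩
    have e2 : L (φ x) ≤ L (φ y) := hy.2 (φ x) ⟨hxA.1, h1⟩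
    exact Linj (le_antisymm e1 e2)
  set K : G → Set G := fun a => {y | 1 < y ∧ (a * y ∈ J \ A) ∧ φ (a * y) = a} with hK
  have hKfin : ∀ a, (K a).Finite := by
    intro a
    have : K a ⊆ (fun y => a * y) ⁻¹' J := fun y hy => hy.2.1.1
    exact Set.Finite.subset (hJfin.preimage (mul_right_injective a).injOn) this
  have hKgood : ∀ a, (K a).Nonempty → K a ∈ goodJ G := by
    intro a hne
    refine ⟨hne, hKfin a, fun y hy => hy.1, ?_⟩
    intro y hy z hz
    have hx := hy.2.1
    have hlt1 : φ (a * y) < a * z := by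
      rw [hy.2.2]; exact lt_mul_of_one_lt_right' a hz.1
    have hlt2 : a * z < a * y := mul_lt_mul_right hz.2 a
    have := hcoh (a * y) hx (a * z) hlt1 hlt2
    exact ⟨hz.1, this.1, this.2.trans hy.2.2⟩
  -- membership facts for x ∈ J \ C
  have hWmem : ∀ x ∈ J \ ((A ∪ {1}) * B), x ∈ J \ A ∧ (φ x)⁻¹ * x ∈ K (φ x) \ B := by
    intro x hx
    have hxA : x ∉ A := by
      intro h
      exact hx.2 (mul_one x ▸ Set.mul_mem_mul (Set.mem_union_left _ h) hB1)
    have hxJA : x ∈ J \ A := ⟨hx.1, hxA⟩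
    have h1 := (hφ x hxJA).1
    have hylt : (1 : G) < (φ x)⁻¹ * x := by
      have := mul_lt_mul_right h1.2 (φ x)⁻¹
      rwa [inv_mul_cancel] at this
    have heq : φ x * ((φ x)⁻¹ * x) = x := by group
    have hyK : (φ x)⁻¹ * x ∈ K (φ x) := by
      refine ⟨hylt, ?_, ?_⟩
      · rw [heq]; exact hxJA
      · rw [heq]
    have hyB : (φ x)⁻¹ * x ∉ B := by
      intro hB
      exact hx.2 (heq ▸ Set.mul_mem_mul (Set.mem_union_left _ h1.1) hB)
    exact ⟨hxJA, hyK, hyB⟩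
  set W : Set G := J \ ((A ∪ {1}) * B) with hW
  have hWfin : W.Finite := hJfin.subset Set.diff_subset
  set T : Finset G := hWfin.toFinset.image φ with hT
  -- cover of W
  have hcover : W ⊆ ⋃ a ∈ T, (fun y => a * y) '' (K a \ B) := by
    intro x hx
    refine Set.mem_iUnion₂.2 ⟨φ x, ?_, ?_⟩
    · exact Finset.mem_image.2 ⟨x, hWfin.mem_toFinset.2 hx, rfl⟩
    · exact ⟨(φ x)⁻¹ * x, (hWmem x hx).2, by group⟩
  have hUfin : ∀ a, ((fun y => a * y) '' (K a \ B)).Finite :=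
    fun a => (((hKfin a).subset Set.diff_subset).image _)
  have h1 : (W.ncard : ℝ) ≤ ∑ a ∈ T, (((fun y => a * y) '' (K a \ B)).ncard : ℝ) := by
    exact_mod_cast aux_ncard_le_sum hcover hUfin
  have h2 : ∀ a ∈ T, (((fun y => a * y) '' (K a \ B)).ncard : ℝ) ≤ γ * ((K a).ncard : ℝ) := by
    intro a ha
    have hKne : (K a).Nonempty := by
      obtain ⟨x, hx, rfl⟩ := Finset.mem_image.1 ha
      rw [Set.Finite.mem_toFinset] at hx
      exact ⟨(φ x)⁻¹ * x, ((hWmem x hx).2).1⟩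
    have := hBd (K a) (hKgood a hKne)
    calc (((fun y => a * y) '' (K a \ B)).ncard : ℝ)
        = ((K a \ B).ncard : ℝ) := by
          rw [Set.ncard_image_of_injective _ (mul_right_injective a)]
      _ ≤ γ * ((K a).ncard : ℝ) := this
  have h3' : ∑ a ∈ T, (K a).ncard ≤ (J \ A).ncard := by
    have heq : ∀ a : G, ((fun y => a * y) '' K a).ncard = (K a).ncard :=
      fun a => Set.ncard_image_of_injective _ (mul_right_injective a)
    have hsub : ∀ a ∈ T, (fun y => a * y) '' K a ⊆ J \ A := by
      rintro a _ x ⟨y, hy, rfl⟩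
      exact hy.2.1
    have hdisj : ∀ a ∈ T, ∀ b ∈ T, a ≠ b →
        Disjoint ((fun y => a * y) '' K a) ((fun y => b * y) '' K b) := by
      intro a _ b _ hab
      rw [Set.disjoint_left]
      rintro x ⟨y, hy, rfl⟩ ⟨z, hz, hzx⟩
      apply hab
      have hzx' : b * z = a * y := hzx
      rw [← hy.2.2, ← hzx', hz.2.2]
    calc ∑ a ∈ T, (K a).ncard
        = ∑ a ∈ T, ((fun y => a * y) '' K a).ncard :=
          Finset.sum_congr rfl fun a _ => (heq a).symm
      _ ≤ (J \ A).ncard := aux_sum_le_ncard hsub hdisj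
          (hJfin.subset Set.diff_subset) (fun a => (hKfin a).image _)
  have h3 : ∑ a ∈ T, ((K a).ncard : ℝ) ≤ ((J \ A).ncard : ℝ) := by
    exact_mod_cast h3'
  calc ((W).ncard : ℝ)
      ≤ ∑ a ∈ T, (((fun y => a * y) '' (K a \ B)).ncard : ℝ) := h1
    _ ≤ ∑ a ∈ T, γ * ((K a).ncard : ℝ) := Finset.sum_le_sum h2
    _ = γ * ∑ a ∈ T, ((K a).ncard : ℝ) := by rw [Finset.mul_sum]
    _ ≤ γ * ((J \ A).ncard : ℝ) := mul_le_mul_of_nonneg_left h3 hγ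


lemma prodFam_zero (A : Fin 0 → Set G) : prodFam A = {1} := by
  ext g
  simp only [prodFam, Set.mem_setOf_eq, Set.mem_singleton_iff]
  constructor
  · rintro ⟨f, -, rfl⟩
    simp
  · rintro rfl
    exact ⟨fun i => i.elim0, fun i => i.elim0, by simp⟩

lemma one_mem_prodFam {n : ℕ} (A : Fin n → Set G) : (1 : G) ∈ prodFam A :=
  ⟨fun _ => 1, fun i => Set.mem_union_right _ rfl, by simp⟩

lemma prodFam_succ {n : ℕ} (A : Fin (n + 1) → Set G) :
    prodFam A = (A 0 ∪ {1}) * prodFam (fun i : Fin n => A i.succ) := by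
  ext g
  constructor
  · rintro ⟨f, hf, rfl⟩
    rw [List.ofFn_succ, List.prod_cons]
    exact Set.mul_mem_mul (hf 0) ⟨fun i => f i.succ, fun i => hf i.succ, rfl⟩
  · rintro ⟨a, ha, q, ⟨f, hf, rfl⟩, rfl⟩
    refine ⟨Fin.cons a f, ?_, ?_⟩
    · intro i
      refine i.cases ?_ ?_
      · simpa using ha
      · intro j
        simpa using hf j
    · rw [List.ofFn_succ, List.prod_cons]
      simp [Fin.cons_zero, Fin.cons_succ]

lemma main_count {n : ℕ} (A : Fin n → Set G) (hA : ∀ i, A i ⊆ Set.Ioi 1)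
    (β : Fin n → ℝ) (hβ0 : ∀ i, 0 ≤ β i)
    (hβd : ∀ i, ∀ J ∈ goodJ G, ((J \ A i).ncard : ℝ) ≤ β i * J.ncard)
    (hAx : ∀ J ∈ goodJ G, ∀ i, ∀ x ∈ J \ A i,
      (A i ∩ Set.Iio x).Nonempty ∧ (A i ∩ Set.Iio x).Finite) :
    ∀ J ∈ goodJ G, ((J \ prodFam A).ncard : ℝ) ≤ (∏ i, β i) * J.ncard := by
  induction n with
  | zero =>
    intro J hJ
    rw [prodFam_zero]
    have h1 : (1 : G) ∉ J := fun h => lt_irrefl _ (hJ.2.2.1 h)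
    rw [Set.diff_singleton_eq_self h1]
    simp
  | succ n ih =>
    intro J hJ
    rw [prodFam_succ]
    have hprodnn : (0:ℝ) ≤ ∏ i : Fin n, β i.succ :=
      Finset.prod_nonneg fun i _ => hβ0 i.succ
    have hQd := ih (fun i => A i.succ) (fun i => hA i.succ) (fun i => β i.succ)
      (fun i => hβ0 i.succ) (fun i => hβd i.succ) (fun J hJ i => hAx J hJ i.succ)
    have h := step_count (A 0) (prodFam (fun i : Fin n => A i.succ)) (hA 0)
      (one_mem_prodFam _) (fun J hJ => hAx J hJ 0)
      (∏ i : Fin n, β i.succ) hprodnn hQd J hJ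
    calc ((J \ ((A 0 ∪ {1}) * prodFam (fun i : Fin n => A i.succ))).ncard : ℝ)
        ≤ (∏ i : Fin n, β i.succ) * ((J \ A 0).ncard : ℝ) := h
      _ ≤ (∏ i : Fin n, β i.succ) * (β 0 * J.ncard) :=
          mul_le_mul_of_nonneg_left (hβd 0 J hJ) hprodnn
      _ = (∏ i, β i) * J.ncard := by rw [Fin.prod_univ_succ]; ring

end Helpers

theorem one_sub_densJ_prodFam_le
    {G : Type*} [Group G] [PartialOrder G]
    [CovariantClass G G (· * ·) (· ≤ ·)]
    [CovariantClass G G (Function.swap (· * ·)) (· ≤ ·)]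
    (h : ℕ) (hh : 2 ≤ h) (A : Fin h → Set G)
    (hA : ∀ i, A i ⊆ Set.Ioi (1 : G))
    (α : Fin h → ℝ) (hα : ∀ i, densJ (goodJ G) (A i) = α i)
    (hAx : ∀ J ∈ goodJ G, ∀ i, ∀ x ∈ J \ A i,
      (A i ∩ Set.Iio x).Nonempty ∧ (A i ∩ Set.Iio x).Finite) :
    1 - densJ (goodJ G) (prodFam A) ≤ ∏ i, (1 - α i) := by
  by_cases hne : (goodJ G).Nonempty
  · obtain ⟨J₀, hJ₀⟩ := hne
    have hpos : ∀ J ∈ goodJ G, (0 : ℝ) < J.ncard := by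
      intro J hJ
      exact_mod_cast (Set.ncard_pos hJ.2.1).2 hJ.1
    have hbdd : ∀ S : Set G,
        BddBelow ((fun J => ((S ∩ J).ncard : ℝ) / (J.ncard : ℝ)) '' goodJ G) := by
      intro S
      refine ⟨0, ?_⟩
      rintro r ⟨J, hJ, rfl⟩
      positivity
    have hβd : ∀ i, ∀ J ∈ goodJ G, ((J \ A i).ncard : ℝ) ≤ (1 - α i) * J.ncard := by
      intro i J hJ
      have hJf := hJ.2.1
      have hJpos := hpos J hJ
      have h1 : α i ≤ ((A i ∩ J).ncard : ℝ) / J.ncard := by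
        rw [← hα i]
        exact csInf_le (hbdd (A i)) ⟨J, hJ, rfl⟩
      have h2 : α i * (J.ncard : ℝ) ≤ ((A i ∩ J).ncard : ℝ) := by
        rw [div_eq_mul_inv] at h1
        calc α i * (J.ncard : ℝ) ≤ (((A i ∩ J).ncard : ℝ) * (J.ncard : ℝ)⁻¹) * J.ncard :=
              mul_le_mul_of_nonneg_right h1 hJpos.le
          _ = ((A i ∩ J).ncard : ℝ) := by field_simp
      have h3 : (J ∩ A i).ncard + (J \ A i).ncard = J.ncard :=
        Set.ncard_inter_add_ncard_diff_eq_ncard J (A i) hJf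
      have h3' : ((J ∩ A i).ncard : ℝ) + ((J \ A i).ncard : ℝ) = (J.ncard : ℝ) := by
        exact_mod_cast h3
      rw [Set.inter_comm] at h2
      nlinarith [h2, h3']
    have hβ0 : ∀ i, 0 ≤ 1 - α i := by
      intro i
      have h1 : α i ≤ ((A i ∩ J₀).ncard : ℝ) / J₀.ncard := by
        rw [← hα i]
        exact csInf_le (hbdd (A i)) ⟨J₀, hJ₀, rfl⟩
      have h2 : ((A i ∩ J₀).ncard : ℝ) / J₀.ncard ≤ 1 := by
        rw [div_le_one (hpos J₀ hJ₀)]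
        exact_mod_cast Set.ncard_le_ncard Set.inter_subset_right hJ₀.2.1
      linarith
    have hmain := main_count A hA (fun i => 1 - α i) hβ0 hβd hAx
    have hP : 1 - ∏ i, (1 - α i) ≤ densJ (goodJ G) (prodFam A) := by
      apply le_csInf (Set.Nonempty.image _ ⟨J₀, hJ₀⟩)
      rintro r ⟨J, hJ, rfl⟩
      have hJf := hJ.2.1
      have hJpos := hpos J hJ
      have h2 := hmain J hJ
      have h3 : (J ∩ prodFam A).ncard + (J \ prodFam A).ncard = J.ncard :=
        Set.ncard_inter_add_ncard_diff_eq_ncard J (prodFam A) hJf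
      have h3' : ((J ∩ prodFam A).ncard : ℝ) + ((J \ prodFam A).ncard : ℝ) = (J.ncard : ℝ) := by
        exact_mod_cast h3
      show 1 - ∏ i, (1 - α i) ≤ ((prodFam A ∩ J).ncard : ℝ) / (J.ncard : ℝ)
      rw [Set.inter_comm, le_div_iff₀ hJpos]
      nlinarith [h2, h3']
    linarith
  · have hemp : goodJ G = ∅ := Set.not_nonempty_iff_eq_empty.1 hne
    have hd0 : ∀ S : Set G, densJ (goodJ G) S = 0 := by
      intro S
      unfold densJ
      rw [hemp, Set.image_empty, Real.sInf_empty]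
    have hα0 : ∀ i, α i = 0 := fun i => (hα i).symm.trans (hd0 (A i))
    rw [hd0]
    simp [hα0]
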